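/- Let G be a compact Hausdorff topological abelian additive group and let θ ∈ G. Then the topological closure of the positive semi-orbit {k • θ : k ∈ ℕ, k ≥ 1} is an additive subgroup of G: it contains 0, and is closed under addition and negation. -/

import Mathlib

open Filter Set

/-- In a compact Hausdorff topological abelian group, the topological closure of the
positive semi-orbit `{k • θ : k ∈ ℕ, k ≥ 1}` of any element `θ` is an additive subgroup:
it contains `0` and is closed under addition and negation. -/
theorem closure_semiorbit_isAddSubgroup {G : Type*} [AddCommGroup G] [TopologicalSpace G]
    [IsTopologicalAddGroup G] [CompactSpace G] [T2Space G] (θ : G) :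
    (0 : G) ∈ closure {x : G | ∃ k : ℕ, 1 ≤ k ∧ x = k • θ} ∧
      (∀ a b : G, a ∈ closure {x : G | ∃ k : ℕ, 1 ≤ k ∧ x = k • θ} →
        b ∈ closure {x : G | ∃ k : ℕ, 1 ≤ k ∧ x = k • θ} →
        a + b ∈ closure {x : G | ∃ k : ℕ, 1 ≤ k ∧ x = k • θ}) ∧
      (∀ a : G, a ∈ closure {x : G | ∃ k : ℕ, 1 ≤ k ∧ x = k • θ} →
        -a ∈ closure {x : G | ∃ k : ℕ, 1 ≤ k ∧ x = k • θ}) := by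
  have key : closure {x : G | ∃ k : ℕ, 1 ≤ k ∧ x = k • θ}
      = ((AddSubgroup.zmultiples θ).topologicalClosure : Set G) := by
    apply le_antisymm
    · apply closure_mono
      rintro x ⟨k, -, rfl⟩
      exact (show (k : ℕ) • θ ∈ AddSubgroup.zmultiples θ from ⟨(k : ℤ), natCast_zsmul θ k⟩)
    · refine closure_minimal ?_ isClosed_closure
      rintro x ⟨m, rfl⟩
      have h := mapClusterPt_self_zsmul_atTop_nsmul θ m
      rw [mem_closure_iff_clusterPt]
      have h' : ClusterPt (m • θ) (map (fun k : ℕ => k • θ) atTop) := h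
      refine h'.mono (le_principal_iff.2 ?_)
      have : {k : ℕ | 1 ≤ k} ∈ (atTop : Filter ℕ) := mem_atTop 1
      exact mem_map.2 (mem_of_superset this fun k hk => ⟨k, hk, rfl⟩)
  rw [key]
  refine ⟨?_, fun a b ha hb => ?_, fun a ha => ?_⟩
  · exact (AddSubgroup.zmultiples θ).topologicalClosure.zero_mem
  · exact (AddSubgroup.zmultiples θ).topologicalClosure.add_mem ha hb
  · exact (AddSubgroup.zmultiples θ).topologicalClosure.neg_mem ha
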